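/- Full repulsiveness of defection: if β v > k v for every player v, then every diagonal entry μ_v = −σ_D·(k v − β v) of the (diagonal) Fréchet derivative of the SR-EGN vector field F at the all-zeros profile is strictly positive, so the full-defection state is repulsive in every direction. -/

import Mathlib

/-- Full repulsiveness of defection: if `β v > k v` for every player `v`, then the
Fréchet derivative of the SR-EGN vector field `F` at the all-zeros profile is the
diagonal linear map with entries `μ_v = -σD * (k v - β v)`, and every diagonal entry
is strictly positive, so full defection is repulsive in every direction. -/
theorem full_defection_repulsive
    (N : ℕ) (hN : 1 ≤ N)
    (A : Fin N → Fin N → ℝ)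
    (hA01 : ∀ v w, A v w = 0 ∨ A v w = 1)
    (hAdiag : ∀ v, A v v = 0)
    (σC σD : ℝ) (hσC : σC < 0) (hσD : 0 < σD)
    (β : Fin N → ℝ)
    (k : Fin N → ℝ) (hk : ∀ v, k v = ∑ w, A v w)
    (G : Fin N → (Fin N → ℝ) → ℝ)
    (hG : ∀ v x, G v x = ∑ w, A v w * ((σC + σD) * x w - σD))
    (f : ℝ → ℝ) (hf : ∀ y, f y = (σC + σD) * y - σD)
    (F : (Fin N → ℝ) → (Fin N → ℝ))
    (hF : ∀ x v, F x v = x v * (1 - x v) * (G v x - β v * f (x v)))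
    (hβ : ∀ v, β v > k v) :
    HasFDerivAt F
      (ContinuousLinearMap.pi (fun v =>
        (-σD * (k v - β v)) • (ContinuousLinearMap.proj v : (Fin N → ℝ) →L[ℝ] ℝ)))
      (fun _ => 0)
    ∧ ∀ v, 0 < -σD * (k v - β v) := by
  constructor
  · rw [hasFDerivAt_pi]
    intro v
    have hFv : (fun x : Fin N → ℝ => F x v)
        = fun x => (x v * (1 - x v)) * (G v x - β v * f (x v)) := by
      funext x; rw [hF]
    rw [hFv]
    -- derivative of x v
    have hproj : HasFDerivAt (fun x : Fin N → ℝ => x v)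
        (ContinuousLinearMap.proj v : (Fin N → ℝ) →L[ℝ] ℝ) (fun _ => 0) :=
      (ContinuousLinearMap.proj v : (Fin N → ℝ) →L[ℝ] ℝ).hasFDerivAt
    have h1 : HasFDerivAt (fun x : Fin N → ℝ => x v * (1 - x v))
        (((fun _ => 0 : Fin N → ℝ) v) • (-(ContinuousLinearMap.proj v : (Fin N → ℝ) →L[ℝ] ℝ))
          + (1 - (fun _ => 0 : Fin N → ℝ) v) • (ContinuousLinearMap.proj v : (Fin N → ℝ) →L[ℝ] ℝ))
        (fun _ => 0) :=
      hproj.mul (hproj.const_sub 1)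
    have h2 : HasFDerivAt (fun x : Fin N → ℝ => G v x - β v * f (x v))
        ((∑ w : Fin N, (A v w) • ((σC + σD) • (ContinuousLinearMap.proj w
            : (Fin N → ℝ) →L[ℝ] ℝ)))
          - (β v) • ((σC + σD) • (ContinuousLinearMap.proj v
            : (Fin N → ℝ) →L[ℝ] ℝ)))
        (fun _ => 0) := by
      have hsum : HasFDerivAt (fun x : Fin N → ℝ => G v x)
          (∑ w : Fin N, (A v w) • ((σC + σD) • (ContinuousLinearMap.proj w
            : (Fin N → ℝ) →L[ℝ] ℝ))) (fun _ => 0) := by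
        have : HasFDerivAt (fun x : Fin N → ℝ =>
            ∑ w : Fin N, A v w * ((σC + σD) * x w - σD))
            (∑ w : Fin N, (A v w) • ((σC + σD) • (ContinuousLinearMap.proj w
              : (Fin N → ℝ) →L[ℝ] ℝ))) (fun _ => 0) := by
          apply HasFDerivAt.fun_sum
          intro w _
          exact (((ContinuousLinearMap.proj w : (Fin N → ℝ) →L[ℝ] ℝ).hasFDerivAt.const_mul
            (σC + σD)).sub_const σD).const_mul (A v w)
        convert this using 2
        exact hG v _
      have hsub : HasFDerivAt (fun x : Fin N → ℝ => β v * f (x v))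
          ((β v) • ((σC + σD) • (ContinuousLinearMap.proj v
            : (Fin N → ℝ) →L[ℝ] ℝ))) (fun _ => 0) := by
        have : HasFDerivAt (fun x : Fin N → ℝ => β v * ((σC + σD) * x v - σD))
            ((β v) • ((σC + σD) • (ContinuousLinearMap.proj v
              : (Fin N → ℝ) →L[ℝ] ℝ))) (fun _ => 0) :=
          ((hproj.const_mul (σC + σD)).sub_const σD).const_mul (β v)
        convert this using 2
        rw [hf]
      exact hsum.sub hsub
    have hmul := h1.mul h2
    convert hmul using 1
    · rfl
    · rfl
    ext1 x
    simp [hG, hf, hk, ContinuousLinearMap.proj_apply, Finset.sum_apply,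
      smul_eq_mul, Finset.sum_mul, mul_comm]
    rw [← Finset.mul_sum]
    ring
  · intro v
    have := hβ v
    nlinarith [hβ v]
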